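/- Let Φ be the conditional two-comparator formula consisting of the three clauses (¬y ∨ ¬x_1 ∨ z_1), (¬y ∨ ¬x_2 ∨ z_1), (¬y ∨ ¬x_1 ∨ ¬x_2 ∨ z_2), where y, x_1, x_2, z_1, z_2 are pairwise distinct variables. Then assigning exactly one of the input variables x_1 or x_2 to true (with all other variables unassigned) produces a restricted formula containing no unit clause, so unit propagation derives no literal from it. -/
import Mathlib


abbrev Lit (V : Type) := V × Bool
abbrev Clause (V : Type) := Finset (Lit V)
abbrev CnfForm (V : Type) := Finset (Clause V)

variable {V : Type} [DecidableEq V]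

/-- Restriction Φ|_ρ : remove clauses containing a literal of ρ, and delete from the
remaining clauses every literal whose complement is in ρ. -/
def restrict (Φ : CnfForm V) (ρ : Finset (Lit V)) : CnfForm V :=
  (Φ.filter fun c => ∀ l ∈ ρ, l ∉ c).image fun c => c.filter fun l => (l.1, !l.2) ∉ ρ

/-- Unit propagation derives the literal `l` from `Φ` : repeatedly assigning the
literals of unit clauses true and simplifying eventually produces the unit clause
`{l}` or the empty clause. -/
inductive UPDerives : CnfForm V → Lit V → Prop
  | unit {Φ : CnfForm V} {l : Lit V} : ({l} : Clause V) ∈ Φ → UPDerives Φ l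
  | bot {Φ : CnfForm V} {l : Lit V} : (∅ : Clause V) ∈ Φ → UPDerives Φ l
  | step {Φ : CnfForm V} {l : Lit V} (m : Lit V) : ({m} : Clause V) ∈ Φ →
      UPDerives (restrict Φ {m}) l → UPDerives Φ l

/-- Unit propagation derives the empty clause from `Φ`, i.e. `Φ* = ⊥`. -/
inductive UPEmpty : CnfForm V → Prop
  | bot {Φ : CnfForm V} : (∅ : Clause V) ∈ Φ → UPEmpty Φ
  | step {Φ : CnfForm V} (m : Lit V) : ({m} : Clause V) ∈ Φ → UPEmpty (restrict Φ {m}) → UPEmpty Φ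

/-- `UPReach Φ Ψ` : the formula `Ψ` is obtained from `Φ` by a sequence of
unit-propagation steps. -/
inductive UPReach : CnfForm V → CnfForm V → Prop
  | refl (Φ : CnfForm V) : UPReach Φ Φ
  | step {Φ Ψ : CnfForm V} (m : Lit V) : UPReach Φ Ψ → ({m} : Clause V) ∈ Ψ →
      UPReach Φ (restrict Ψ {m})

/-- The set of variables occurring in `Φ`. -/
def varsOf (Φ : CnfForm V) : Finset V := Φ.biUnion fun c => c.image Prod.fst

/-- A Horn formula: every clause contains at most one positive literal. -/
def IsHorn (Φ : CnfForm V) : Prop := ∀ c ∈ Φ, (c.filter fun l => l.2 = true).card ≤ 1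

/-- `Φ⁻` : the negative clauses of `Φ` (no positive literal). -/
def negClauses (Φ : CnfForm V) : CnfForm V := Φ.filter fun c => ∀ l ∈ c, l.2 = false

/-- `Φ⁺` : the clauses of `Φ` with exactly one positive literal. -/
def posPart (Φ : CnfForm V) : CnfForm V :=
  Φ.filter fun c => (c.filter fun l => l.2 = true).card = 1

/-- For the conditional two-comparator formula consisting of the
clauses `(¬y ∨ ¬x_1 ∨ z_1)`, `(¬y ∨ ¬x_2 ∨ z_1)`, `(¬y ∨ ¬x_1 ∨ ¬x_2 ∨ z_2)`,
assigning exactly one of the inputs `x_1` or `x_2` to true (all other variables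
unassigned) yields a restricted formula with no unit clause, so unit propagation
derives no literal from it. -/
-- aux

private lemma no_unit_no_derive {V : Type} [DecidableEq V] {Φ : CnfForm V}
    (h1 : ∀ l : Lit V, ({l} : Clause V) ∉ Φ) (h2 : (∅ : Clause V) ∉ Φ) :
    ∀ l : Lit V, ¬ UPDerives Φ l := by
  intro l hd
  cases hd with
  | unit h => exact h1 _ h
  | bot h => exact h2 h
  | step m hm _ => exact h1 _ hm

private lemma mem_restrict_two {V : Type} [DecidableEq V] {Φ : CnfForm V} {ρ : Finset (Lit V)}
    {c : Clause V} (hc : c ∈ restrict Φ ρ) :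
    ∃ d ∈ Φ, c = d.filter fun l => (l.1, !l.2) ∉ ρ := by
  simp only [restrict, Finset.mem_image, Finset.mem_filter] at hc
  obtain ⟨d, ⟨hd, _⟩, h⟩ := hc
  exact ⟨d, hd, h.symm⟩

theorem stmt18 {V : Type} [DecidableEq V] (y x₁ x₂ z₁ z₂ : V)
    (hdist : ([y, x₁, x₂, z₁, z₂] : List V).Pairwise (· ≠ ·)) :
    ∀ u : V, (u = x₁ ∨ u = x₂) →
      (∀ l : Lit V, ({l} : Clause V) ∉
          restrict ({({(y, false), (x₁, false), (z₁, true)} : Clause V),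
                     ({(y, false), (x₂, false), (z₁, true)} : Clause V),
                     ({(y, false), (x₁, false), (x₂, false), (z₂, true)} : Clause V)} : CnfForm V)
            ({((u, true) : Lit V)} : Finset (Lit V))) ∧
      (∀ l : Lit V, ¬ UPDerives
          (restrict ({({(y, false), (x₁, false), (z₁, true)} : Clause V),
                      ({(y, false), (x₂, false), (z₁, true)} : Clause V),
                      ({(y, false), (x₁, false), (x₂, false), (z₂, true)} : Clause V)} : CnfForm V)
            ({((u, true) : Lit V)} : Finset (Lit V))) l) := by

  intro u hu
  simp only [List.pairwise_cons, List.mem_cons, List.mem_singleton, List.not_mem_nil] at hdist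
  obtain ⟨hy, hx1, hx2, _⟩ := hdist
  have hyu : y ≠ u := by rcases hu with h | h <;> subst h <;> simp_all
  -- every clause of the restricted formula contains (y,false) and some (z,true)
  have key : ∀ c ∈ restrict ({({(y, false), (x₁, false), (z₁, true)} : Clause V),
                     ({(y, false), (x₂, false), (z₁, true)} : Clause V),
                     ({(y, false), (x₁, false), (x₂, false), (z₂, true)} : Clause V)} : CnfForm V)
            ({((u, true) : Lit V)} : Finset (Lit V)),
      ∃ z : V, ((y, false) : Lit V) ∈ c ∧ ((z, true) : Lit V) ∈ c := by
    intro c hc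
    obtain ⟨d, hd, rfl⟩ := mem_restrict_two hc
    simp only [Finset.mem_insert, Finset.mem_singleton] at hd
    have hyP : (((y, false) : Lit V).1, !((y, false) : Lit V).2) ∉
        ({((u, true) : Lit V)} : Finset (Lit V)) := by
      simp [hyu]
    rcases hd with rfl | rfl | rfl
    · exact ⟨z₁, by simp [Finset.mem_filter, hyu], by simp [Finset.mem_filter]⟩
    · exact ⟨z₁, by simp [Finset.mem_filter, hyu], by simp [Finset.mem_filter]⟩
    · exact ⟨z₂, by simp [Finset.mem_filter, hyu], by simp [Finset.mem_filter]⟩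
  have h1 : ∀ l : Lit V, ({l} : Clause V) ∉
      restrict ({({(y, false), (x₁, false), (z₁, true)} : Clause V),
                     ({(y, false), (x₂, false), (z₁, true)} : Clause V),
                     ({(y, false), (x₁, false), (x₂, false), (z₂, true)} : Clause V)} : CnfForm V)
            ({((u, true) : Lit V)} : Finset (Lit V)) := by
    intro l hl
    obtain ⟨z, hy', hz'⟩ := key _ hl
    simp only [Finset.mem_singleton] at hy' hz'
    rw [← hz'] at hy'
    simpa using congrArg Prod.snd hy'
  have h2 : (∅ : Clause V) ∉
      restrict ({({(y, false), (x₁, false), (z₁, true)} : Clause V),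
                     ({(y, false), (x₂, false), (z₁, true)} : Clause V),
                     ({(y, false), (x₁, false), (x₂, false), (z₂, true)} : Clause V)} : CnfForm V)
            ({((u, true) : Lit V)} : Finset (Lit V)) := by
    intro hl
    obtain ⟨z, hy', _⟩ := key _ hl
    simp at hy'
  exact ⟨h1, no_unit_no_derive h1 h2⟩
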